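/- Let X and Y be nonempty finite subsets of an abelian group G. If there is an element c of G such that |X ∩ (c - Y)| = 1, then |X + Y| ≥ |X| + |Y| - 1. -/

import Mathlib

open scoped Pointwise

open Finset in
private lemma scherk_aux {G : Type*} [AddCommGroup G] [DecidableEq G] :
    ∀ n (X Y : Finset G), Y.card ≤ n → 0 ∈ X → 0 ∈ Y →
      (∀ z ∈ X, -z ∈ Y → z = 0) → X.card + Y.card ≤ (X + Y).card + 1 := by
  intro n
  induction n with
  | zero =>
    intro X Y hn _ h0Y _
    exact absurd (card_pos.2 ⟨0, h0Y⟩) (by omega)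
  | succ n ih =>
    intro X Y hn h0X h0Y h
    by_cases hY1 : Y.card ≤ 1
    · have hY : Y = {0} := by
        apply eq_singleton_iff_unique_mem.2
        refine ⟨h0Y, fun y hy => ?_⟩
        by_contra hne
        have : 1 < Y.card := one_lt_card.2 ⟨y, hy, 0, h0Y, hne⟩
        omega
      subst hY
      simp
    by_cases hcase : ∃ e ∈ X, ∃ y ∈ Y, y + e ∉ X
    · obtain ⟨e, heX, y₀, hy₀Y, hy₀⟩ := hcase
      set X' := X ∪ Y.image (· + e) with hX'def
      set Y' := Y.filter (fun y => y + e ∈ X) with hY'def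
      have hYsub : Y' ⊆ Y := filter_subset _ _
      have hYlt : Y'.card < Y.card := by
        refine card_lt_card ⟨hYsub, fun hsub => hy₀ ?_⟩
        exact (mem_filter.1 (hsub hy₀Y)).2
      have h0X' : (0:G) ∈ X' := mem_union_left _ h0X
      have h0Y' : (0:G) ∈ Y' := mem_filter.2 ⟨h0Y, by simpa using heX⟩
      have hinv : ∀ z ∈ X', -z ∈ Y' → z = 0 := by
        intro z hz hnz
        rw [mem_filter] at hnz
        rcases mem_union.1 hz with hz | hz
        · exact h z hz hnz.1
        · obtain ⟨y, hyY, rfl⟩ := mem_image.1 hz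
          have h1 : -(y + e) + e ∈ X := hnz.2
          have h2 : -(y + e) + e = -y := by abel
          rw [h2] at h1
          have hy0 : y = 0 := by
            have := h (-y) h1 (by simpa using hyY)
            simpa using this
          subst hy0
          have he0 : e = 0 := by
            refine h e heX ?_
            simpa using hnz.1
          simp [he0]
      have hsum : X' + Y' ⊆ X + Y := by
        intro s hs
        obtain ⟨x, hx, w, hw, rfl⟩ := mem_add.1 hs
        have hw' := mem_filter.1 hw
        rcases mem_union.1 hx with hx | hx
        · exact add_mem_add hx hw'.1
        · obtain ⟨y, hyY, rfl⟩ := mem_image.1 hx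
          have : (y + e) + w = (w + e) + y := by abel
          rw [this]
          exact add_mem_add hw'.2 hyY
      have hcard : X'.card + Y'.card = X.card + Y.card := by
        have h1 := card_union_add_card_inter X (Y.image (· + e))
        rw [← hX'def] at h1
        have h2 : (Y.image (· + e)).card = Y.card :=
          card_image_of_injective _ (add_left_injective e)
        have h3 : Y'.card = (X ∩ Y.image (· + e)).card := by
          rw [← card_image_of_injective Y' (add_left_injective e)]
          congr 1
          ext z
          simp only [mem_image, hY'def, mem_filter, mem_inter]
          constructor
          · rintro ⟨y, ⟨hyY, hyX⟩, rfl⟩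
            exact ⟨hyX, y, hyY, rfl⟩
          · rintro ⟨hzX, y, hyY, rfl⟩
            exact ⟨y, ⟨hyY, hzX⟩, rfl⟩
        omega
      have hih := ih X' Y' (by omega) h0X' h0Y' hinv
      have hle := card_le_card hsum
      omega
    · push_neg at hcase
      exfalso
      obtain ⟨y, hyY, hy0⟩ : ∃ y ∈ Y, y ≠ 0 :=
        exists_mem_ne (by omega : 1 < Y.card) 0
      have himg : X.image (· + y) = X := by
        apply eq_of_subset_of_card_le
        · intro z hz
          obtain ⟨x, hx, rfl⟩ := mem_image.1 hz
          rw [add_comm]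
          exact hcase x hx y hyY
        · rw [card_image_of_injective _ (add_left_injective y)]
      have h0mem : (0:G) ∈ X.image (· + y) := by rw [himg]; exact h0X
      obtain ⟨x, hx, hxy⟩ := mem_image.1 h0mem
      have hnyX : -y ∈ X := by
        have hxval : x = -y := eq_neg_of_add_eq_zero_left hxy
        rwa [hxval] at hx
      have := h (-y) hnyX (by simpa using hyY)
      exact hy0 (by simpa using this)

theorem stmt1 {G : Type*} [AddCommGroup G] [DecidableEq G]
    (X Y : Finset G) (hX : X.Nonempty) (hY : Y.Nonempty)
    (c : G) (h : (X ∩ (({c} : Finset G) - Y)).card = 1) :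
    X.card + Y.card ≤ (X + Y).card + 1 := by
  classical
  obtain ⟨a, ha⟩ := Finset.card_eq_one.1 h
  have hamem : a ∈ X ∩ (({c} : Finset G) - Y) := ha ▸ Finset.mem_singleton_self a
  have haX : a ∈ X := (Finset.mem_inter.1 hamem).1
  obtain ⟨c', hc', b, hbY, hab⟩ := Finset.mem_sub.1 (Finset.mem_inter.1 hamem).2
  rw [Finset.mem_singleton] at hc'
  rw [hc'] at hab
  have hbval : c - a ∈ Y := by
    have hb : b = c - a := by rw [← hab]; abel
    rwa [hb] at hbY
  have h0X' : (0:G) ∈ X.image (fun x => x - a) :=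
    Finset.mem_image.2 ⟨a, haX, sub_self a⟩
  have h0Y' : (0:G) ∈ Y.image (fun y => y - (c - a)) :=
    Finset.mem_image.2 ⟨c - a, hbval, sub_self _⟩
  have hinv : ∀ z ∈ X.image (fun x => x - a),
      -z ∈ Y.image (fun y => y - (c - a)) → z = 0 := by
    intro z hz hnz
    obtain ⟨x, hx, hxz⟩ := Finset.mem_image.1 hz
    obtain ⟨y, hy, hyz⟩ := Finset.mem_image.1 hnz
    have hmem : x ∈ X ∩ (({c} : Finset G) - Y) := by
      refine Finset.mem_inter.2 ⟨hx, Finset.mem_sub.2 ⟨c, Finset.mem_singleton_self c, y, hy, ?_⟩⟩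
      have hyv : y = -z + (c - a) := by rw [← hyz]; abel
      rw [hyv, ← hxz]; abel
    have hx_eq : x = a := by
      have := ha ▸ hmem
      simpa using this
    rw [← hxz, hx_eq]
    exact sub_self a
  have hsum : (X.image fun x => x - a) + (Y.image fun y => y - (c - a))
      = (X + Y).image (fun s => s - c) := by
    ext z
    simp only [Finset.mem_add, Finset.mem_image]
    constructor
    · rintro ⟨x', ⟨x, hx, rfl⟩, y', ⟨y, hy, rfl⟩, rfl⟩
      exact ⟨x + y, ⟨x, hx, y, hy, rfl⟩, by abel⟩
    · rintro ⟨s, ⟨x, hx, y, hy, rfl⟩, rfl⟩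
      exact ⟨x - a, ⟨x, hx, rfl⟩, y - (c - a), ⟨y, hy, rfl⟩, by abel⟩
  have hcX : (X.image fun x => x - a).card = X.card :=
    Finset.card_image_of_injective _ sub_left_injective
  have hcY : (Y.image fun y => y - (c - a)).card = Y.card :=
    Finset.card_image_of_injective _ sub_left_injective
  have hcS : ((X + Y).image (fun s => s - c)).card = (X + Y).card :=
    Finset.card_image_of_injective _ sub_left_injective
  have hmain := scherk_aux ((Y.image fun y => y - (c - a)).card)
    (X.image fun x => x - a) (Y.image fun y => y - (c - a)) le_rfl h0X' h0Y' hinv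
  rw [hsum, hcS, hcX, hcY] at hmain
  exact hmain
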